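/- Let J be an ideal of S = K[x_1,...,x_n] with a fixed monomial order, and let f ∈ S be a nonzero polynomial that is a nonzerodivisor on S/J. Then in(J ∩ (f)) = in(f) · in(J). -/

import Mathlib

open MvPolynomial

variable {K : Type*} [Field K] {n : ℕ}

/-- The leading monomial (exponent vector) of a polynomial with respect to a monomial
order `m`: the maximum of the support; by convention `lm m 0 = 0`. -/
noncomputable def lm (m : MonomialOrder (Fin n)) (f : MvPolynomial (Fin n) K) :
    Fin n →₀ ℕ :=
  m.toSyn.symm (f.support.sup fun d => m.toSyn d)

/-- The initial ideal of `I`: the ideal generated by the leading monomials of the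
nonzero elements of `I`. -/
noncomputable def initialIdeal (m : MonomialOrder (Fin n))
    (I : Ideal (MvPolynomial (Fin n) K)) : Ideal (MvPolynomial (Fin n) K) :=
  Ideal.span {p | ∃ f ∈ I, f ≠ 0 ∧ p = monomial (lm m f) (1 : K)}

/-- `G` is a Gröbner basis of `I`: a finite set of nonzero polynomials generating `I`
whose leading monomials generate the initial ideal of `I`. -/
def IsGroebnerBasis (m : MonomialOrder (Fin n)) (I : Ideal (MvPolynomial (Fin n) K))
    (G : Set (MvPolynomial (Fin n) K)) : Prop :=
  G.Finite ∧ (0 : MvPolynomial (Fin n) K) ∉ G ∧ Ideal.span G = I ∧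
    Ideal.span ((fun g => monomial (lm m g) (1 : K)) '' G) = initialIdeal m I

/-- The S-polynomial `S(f,g)` with respect to the monomial order `m`. -/
noncomputable def sPoly (m : MonomialOrder (Fin n)) (f g : MvPolynomial (Fin n) K) :
    MvPolynomial (Fin n) K :=
  monomial (lm m f ⊔ lm m g - lm m f) (f.coeff (lm m f))⁻¹ * f -
    monomial (lm m f ⊔ lm m g - lm m g) (g.coeff (lm m g))⁻¹ * g

/-- An ideal is a monomial ideal if it is generated by monomials. -/
def IsMonomialIdeal (I : Ideal (MvPolynomial (Fin n) K)) : Prop :=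
  ∃ M : Set (Fin n →₀ ℕ), I = Ideal.span ((fun μ => (monomial μ (1 : K))) '' M)

lemma toSyn_lm (m : MonomialOrder (Fin n)) (f : MvPolynomial (Fin n) K) :
    m.toSyn (lm m f) = f.support.sup fun d => m.toSyn d := by
  simp [lm]

lemma le_toSyn_lm (m : MonomialOrder (Fin n)) {f : MvPolynomial (Fin n) K}
    {d : Fin n →₀ ℕ} (hd : d ∈ f.support) : m.toSyn d ≤ m.toSyn (lm m f) := by
  rw [toSyn_lm]; exact Finset.le_sup hd

lemma lm_mem_support (m : MonomialOrder (Fin n)) {f : MvPolynomial (Fin n) K}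
    (hf : f ≠ 0) : lm m f ∈ f.support := by
  obtain ⟨b, hb, hsup⟩ := Finset.exists_mem_eq_sup f.support
    (MvPolynomial.support_nonempty.mpr hf) (fun d => m.toSyn d)
  have : lm m f = b := by simp [lm, hsup]
  rwa [this]

lemma coeff_lm_ne_zero (m : MonomialOrder (Fin n)) {f : MvPolynomial (Fin n) K}
    (hf : f ≠ 0) : f.coeff (lm m f) ≠ 0 :=
  MvPolynomial.mem_support_iff.mp (lm_mem_support m hf)

lemma coeff_mul_lm_add_lm (m : MonomialOrder (Fin n)) (f g : MvPolynomial (Fin n) K) :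
    (f * g).coeff (lm m f + lm m g) = f.coeff (lm m f) * g.coeff (lm m g) := by
  rw [MvPolynomial.coeff_mul]
  rw [Finset.sum_eq_single (lm m f, lm m g)]
  · intro b hb hne
    rw [Finset.HasAntidiagonal.mem_antidiagonal] at hb
    by_contra hc
    have h1 : m.toSyn b.1 ≤ m.toSyn (lm m f) :=
      le_toSyn_lm m (MvPolynomial.mem_support_iff.mpr (left_ne_zero_of_mul hc))
    have h2 : m.toSyn b.2 ≤ m.toSyn (lm m g) :=
      le_toSyn_lm m (MvPolynomial.mem_support_iff.mpr (right_ne_zero_of_mul hc))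
    have hsum : m.toSyn b.1 + m.toSyn b.2 = m.toSyn (lm m f) + m.toSyn (lm m g) := by
      rw [← map_add, ← map_add, hb]
    have hb1 : b.1 = lm m f := by
      by_contra h
      have : m.toSyn b.1 < m.toSyn (lm m f) :=
        lt_of_le_of_ne h1 fun he => h (m.toSyn.injective he)
      exact absurd hsum (ne_of_lt (add_lt_add_of_lt_of_le this h2))
    have hb2 : b.2 = lm m g := by
      have := hsum
      rw [hb1] at this
      exact m.toSyn.injective (add_left_cancel this)
    exact hne (Prod.ext hb1 hb2)
  · intro h
    simp only [Finset.HasAntidiagonal.mem_antidiagonal] at h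
    exact absurd trivial h

lemma lm_mul (m : MonomialOrder (Fin n)) {f g : MvPolynomial (Fin n) K}
    (hf : f ≠ 0) (hg : g ≠ 0) : lm m (f * g) = lm m f + lm m g := by
  have hc : (f * g).coeff (lm m f + lm m g) ≠ 0 := by
    rw [coeff_mul_lm_add_lm]
    exact mul_ne_zero (coeff_lm_ne_zero m hf) (coeff_lm_ne_zero m hg)
  apply m.toSyn.injective
  apply le_antisymm
  · rw [toSyn_lm]
    apply Finset.sup_le
    intro d hd
    rw [MvPolynomial.mem_support_iff, MvPolynomial.coeff_mul] at hd
    obtain ⟨b, hb, hbne⟩ := Finset.exists_ne_zero_of_sum_ne_zero hd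
    rw [Finset.HasAntidiagonal.mem_antidiagonal] at hb
    calc m.toSyn d = m.toSyn b.1 + m.toSyn b.2 := by rw [← map_add, hb]
      _ ≤ m.toSyn (lm m f) + m.toSyn (lm m g) :=
        add_le_add (le_toSyn_lm m (MvPolynomial.mem_support_iff.mpr (left_ne_zero_of_mul hbne)))
          (le_toSyn_lm m (MvPolynomial.mem_support_iff.mpr (right_ne_zero_of_mul hbne)))
      _ = m.toSyn (lm m f + lm m g) := (map_add _ _ _).symm
  · exact le_toSyn_lm m (MvPolynomial.mem_support_iff.mpr hc)

lemma mem_inf_span_singleton {J : Ideal (MvPolynomial (Fin n) K)}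
    {f : MvPolynomial (Fin n) K}
    (hreg : IsSMulRegular (MvPolynomial (Fin n) K ⧸ J) f)
    {x : MvPolynomial (Fin n) K} :
    x ∈ J ⊓ Ideal.span {f} ↔ ∃ h ∈ J, x = f * h := by
  constructor
  · rintro ⟨hxJ, hxf⟩
    obtain ⟨c, rfl⟩ := Ideal.mem_span_singleton'.mp hxf
    refine ⟨c, ?_, (mul_comm c f)⟩
    have key : f • (Ideal.Quotient.mk J c) = Ideal.Quotient.mk J (c * f) := by
      rw [mul_comm]; rfl
    have h0 : f • (Ideal.Quotient.mk J c) = f • (0 : MvPolynomial (Fin n) K ⧸ J) := by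
      rw [key, smul_zero, Ideal.Quotient.eq_zero_iff_mem]
      exact hxJ
    have := hreg h0
    rwa [← Ideal.Quotient.eq_zero_iff_mem]
  · rintro ⟨h, hh, rfl⟩
    exact ⟨J.mul_mem_left f hh, Ideal.mem_span_singleton.mpr (Dvd.intro h rfl)⟩

/-- For `f` a nonzero polynomial, regular on `S/J`: `in(J ∩ (f)) = (in(f)) · in(J)`. -/
theorem stmt8 (m : MonomialOrder (Fin n)) (J : Ideal (MvPolynomial (Fin n) K))
    (f : MvPolynomial (Fin n) K) (hf : f ≠ 0)
    (hreg : IsSMulRegular (MvPolynomial (Fin n) K ⧸ J) f) :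
    initialIdeal m (J ⊓ Ideal.span {f}) =
      Ideal.span {(monomial (lm m f) (1 : K))} * initialIdeal m J := by
  apply le_antisymm
  · rw [initialIdeal, Ideal.span_le]
    rintro p ⟨g, hg, hg0, rfl⟩
    obtain ⟨h, hhJ, rfl⟩ := (mem_inf_span_singleton hreg).mp hg
    have hh0 : h ≠ 0 := by rintro rfl; simp at hg0
    have hmon : (monomial (lm m (f * h)) (1 : K)) =
        monomial (lm m f) (1 : K) * monomial (lm m h) (1 : K) := by
      rw [monomial_mul, one_mul, lm_mul m hf hh0]
    rw [hmon]
    exact Ideal.mul_mem_mul (Ideal.subset_span rfl)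
      (Ideal.subset_span ⟨h, hhJ, hh0, rfl⟩)
  · rw [Ideal.mul_le]
    intro r hr s hs
    obtain ⟨c, rfl⟩ := Ideal.mem_span_singleton'.mp hr
    have key : monomial (lm m f) (1 : K) * s ∈ initialIdeal m (J ⊓ Ideal.span {f}) := by
      rw [initialIdeal] at hs ⊢
      refine Submodule.span_induction ?_ ?_ ?_ ?_ hs
      · rintro p ⟨h, hhJ, hh0, rfl⟩
        apply Ideal.subset_span
        refine ⟨f * h, (mem_inf_span_singleton hreg).mpr ⟨h, hhJ, rfl⟩,
          mul_ne_zero hf hh0, ?_⟩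
        rw [lm_mul m hf hh0, monomial_mul, one_mul]
      · simp
      · intro x y _ _ hx hy
        rw [mul_add]; exact add_mem hx hy
      · intro a x _ hx
        rw [smul_eq_mul, mul_left_comm]
        exact Ideal.mul_mem_left _ a hx
    rw [mul_assoc]
    exact Ideal.mul_mem_left _ c key
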